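/- Suppose that for every subset A of vertices of C_n □ P_m that dominates all vertices except possibly some in the top and bottom rows, the wasted domination w(A) = 5|A| − |N[A]| (computed in C_n □ P_{m+2} with the cylinder occupying the middle m rows) is at least a. Then for any t disjoint such blocks stacked to form C_n □ P_{tm}, every dominating set S of C_n □ P_{tm} satisfies |S| ≥ (tmn + (t−2)a)/5, provided the two boundary blocks contribute waste at least 0. -/

import Mathlib

open SimpleGraph

/-- Closed neighborhood of a set of vertices: the set plus everything adjacent to it. -/
def closedNbhd {V : Type*} (G : SimpleGraph V) (S : Set V) : Set V :=
  {v | v ∈ S ∨ ∃ u ∈ S, G.Adj u v}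

/-- Wasted domination of a set. -/
noncomputable def waste {V : Type*} (G : SimpleGraph V) (S : Set V) : ℤ :=
  5 * S.ncard - (closedNbhd G S).ncard

/-- A dominating set. -/
def IsDomSet {V : Type*} (G : SimpleGraph V) (S : Set V) : Prop :=
  ∀ v, v ∈ S ∨ ∃ u ∈ S, G.Adj u v

/-- The domination number of a graph. -/
noncomputable def domNum {V : Type*} (G : SimpleGraph V) : ℕ :=
  sInf {k | ∃ S : Set V, S.Finite ∧ S.ncard = k ∧ IsDomSet G S}

section Helpers

lemma ncard_le_five {α : Type*} (a b c d e : α) :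
    ({a, b, c, d, e} : Set α).ncard ≤ 5 := by
  have h1 := Set.ncard_insert_le a ({b, c, d, e} : Set α)
  have h2 := Set.ncard_insert_le b ({c, d, e} : Set α)
  have h3 := Set.ncard_insert_le c ({d, e} : Set α)
  have h4 := Set.ncard_insert_le d ({e} : Set α)
  have h5 : ({e} : Set α).ncard = 1 := Set.ncard_singleton e
  omega

lemma closedNbhd_insert {V : Type*} (G : SimpleGraph V) (x : V) (A : Set V) :
    closedNbhd G (insert x A) = closedNbhd G {x} ∪ closedNbhd G A := by
  ext v
  simp only [closedNbhd, Set.mem_setOf_eq, Set.mem_insert_iff, Set.mem_union,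
    Set.mem_singleton_iff]
  aesop

lemma closedNbhd_card_le {V : Type*} [Finite V] (G : SimpleGraph V)
    (h5 : ∀ v : V, (closedNbhd G {v}).ncard ≤ 5) (A : Set V) :
    (closedNbhd G A).ncard ≤ 5 * A.ncard := by
  refine Set.Finite.induction_on A A.toFinite ?_ ?_
  · simp [closedNbhd]
  · intro x A' hx hfin ih
    rw [closedNbhd_insert, Set.ncard_insert_of_notMem hx A'.toFinite]
    have := Set.ncard_union_le (closedNbhd G {x}) (closedNbhd G A')
    have := h5 x
    omega

lemma ncard_biUnion_le {α : Type*} (I : Finset ℕ) (s : ℕ → Set α) :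
    (⋃ i ∈ I, s i).ncard ≤ ∑ i ∈ I, (s i).ncard := by
  induction I using Finset.induction with
  | empty => simp
  | insert i I h ih =>
    rw [Finset.sum_insert h, Finset.set_biUnion_insert]
    exact le_trans (Set.ncard_union_le _ _) (by omega)

lemma sum_ncard_le_of_disjoint {α : Type*} [Finite α] (I : Finset ℕ) (s : ℕ → Set α)
    (S : Set α) (hsub : ∀ i ∈ I, s i ⊆ S)
    (hdisj : ∀ i ∈ I, ∀ j ∈ I, i ≠ j → Disjoint (s i) (s j)) :
    ∑ i ∈ I, (s i).ncard ≤ S.ncard := by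
  induction I using Finset.induction generalizing S with
  | empty => simp
  | insert i I h ih =>
    rw [Finset.sum_insert h]
    have h1 : ∀ j ∈ I, s j ⊆ S \ s i := by
      intro j hj
      refine Set.subset_diff.mpr ⟨hsub j (Finset.mem_insert_of_mem hj), ?_⟩
      exact (hdisj i (Finset.mem_insert_self i I) j (Finset.mem_insert_of_mem hj)
        (by rintro rfl; exact h hj)).symm
    have h2 := ih (S \ s i) h1
      (fun a ha b hb hab =>
        hdisj a (Finset.mem_insert_of_mem ha) b (Finset.mem_insert_of_mem hb) hab)
    have h3 : (S \ s i).ncard = S.ncard - (s i).ncard :=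
      Set.ncard_diff (hsub i (Finset.mem_insert_self i I))
    have h4 : (s i).ncard ≤ S.ncard :=
      Set.ncard_le_ncard (hsub i (Finset.mem_insert_self i I)) S.toFinite
    omega

lemma five_bound {n M : ℕ} (v : Fin (n+2) × Fin (M+2)) :
    (closedNbhd (cycleGraph (n+2) □ pathGraph (M+2)) {v}).ncard ≤ 5 := by
  refine le_trans (Set.ncard_le_ncard ?_ (Set.toFinite _))
    (ncard_le_five v (v.1 - 1, v.2) (v.1 + 1, v.2) (v.1, v.2 - 1) (v.1, v.2 + 1))
  rintro w hw
  simp only [Set.mem_insert_iff, Set.mem_singleton_iff]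
  rcases hw with h | ⟨u, hu, hadj⟩
  · rw [Set.mem_singleton_iff] at h; exact Or.inl h
  · rw [Set.mem_singleton_iff] at hu
    subst hu
    rw [boxProd_adj] at hadj
    rcases hadj with ⟨hc, he⟩ | ⟨hp, he⟩
    · rw [cycleGraph_adj] at hc
      have hw2 : w.2 = u.2 := he.symm
      rcases hc with h1 | h1
      · have hw1 : w.1 = u.1 - 1 := by rw [← h1]; abel
        exact Or.inr (Or.inl (Prod.ext hw1 hw2))
      · have hw1 : w.1 = u.1 + 1 := by rw [← h1]; abel
        exact Or.inr (Or.inr (Or.inl (Prod.ext hw1 hw2)))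
    · rw [pathGraph_adj] at hp
      have hw1 : w.1 = u.1 := he.symm
      have hlt := w.2.isLt
      have hlt2 := u.2.isLt
      rcases hp with h1 | h1
      · have hw2 : w.2 = u.2 + 1 := by
          apply Fin.ext
          rw [Fin.add_def]
          simp only [Fin.val_one]
          rw [Nat.mod_eq_of_lt (by omega)]
          omega
        exact Or.inr (Or.inr (Or.inr (Or.inr (Prod.ext hw1 hw2))))
      · have hw2 : w.2 = u.2 - 1 := by
          have h2 : w.2 + 1 = u.2 := by
            apply Fin.ext
            rw [Fin.add_def]
            simp only [Fin.val_one]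
            rw [Nat.mod_eq_of_lt (by omega)]
            omega
          rw [← h2]; abel
        exact Or.inr (Or.inr (Or.inr (Or.inl (Prod.ext hw1 hw2))))

end Helpers

theorem stmt12 (n m t : ℕ) (hn : 3 ≤ n) (hm : 1 ≤ m) (ht : 2 ≤ t) (a : ℤ)
    (hA : ∀ A : Set (Fin n × Fin (m + 2)),
      (∀ v ∈ A, 1 ≤ (v.2 : ℕ) ∧ (v.2 : ℕ) ≤ m) →
      (∀ v : Fin n × Fin (m + 2), 2 ≤ (v.2 : ℕ) → (v.2 : ℕ) ≤ m - 1 →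
        v ∈ closedNbhd (cycleGraph n □ pathGraph (m + 2)) A) →
      waste (cycleGraph n □ pathGraph (m + 2)) A ≥ a)
    (S : Set (Fin n × Fin (t * m))) (hS : IsDomSet (cycleGraph n □ pathGraph (t * m)) S) :
    (S.ncard : ℚ) ≥ ((t : ℚ) * m * n + ((t : ℚ) - 2) * a) / 5 := by
  classical
  obtain ⟨n', rfl⟩ : ∃ n', n = n' + 2 := ⟨n - 2, by omega⟩
  have hTM : 0 < t * m := Nat.mul_pos (by omega) hm
  have hm0 : 0 < m := hm
  set B := cycleGraph (n' + 2) □ pathGraph (m + 2) with hBdef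
  set G := cycleGraph (n' + 2) □ pathGraph (t * m) with hGdef
  have hblock : ∀ k, k < t → k * m + m ≤ t * m := by
    intro k hk
    have h1 : (k + 1) * m ≤ t * m := Nat.mul_le_mul_right m (by omega)
    rw [add_mul, one_mul] at h1
    exact h1
  set A : ℕ → Set (Fin (n' + 2) × Fin (m + 2)) := fun k =>
    {p | 1 ≤ p.2.val ∧ p.2.val ≤ m ∧ ∃ q ∈ S, q.1 = p.1 ∧ q.2.val = k * m + p.2.val - 1}
    with hAdef
  set Nb : ℕ → Set (Fin (n' + 2) × Fin (m + 2)) := fun k => closedNbhd B (A k) with hNbdef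
  have hcond1 : ∀ k, ∀ v ∈ A k, 1 ≤ v.2.val ∧ v.2.val ≤ m := by
    intro k v hv
    simp only [hAdef, Set.mem_setOf_eq] at hv
    exact ⟨hv.1, hv.2.1⟩
  have hcond2 : ∀ k, k < t → ∀ p : Fin (n' + 2) × Fin (m + 2),
      2 ≤ p.2.val → p.2.val ≤ m - 1 → p ∈ Nb k := by
    intro k hk p h2 hm1
    have hbk := hblock k hk
    have hpm := p.2.isLt
    have hrow : k * m + p.2.val - 1 < t * m := by omega
    set q : Fin (n' + 2) × Fin (t * m) := (p.1, ⟨k * m + p.2.val - 1, hrow⟩) with hqdef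
    have hq1 : q.1 = p.1 := rfl
    have hq2 : (q.2 : ℕ) = k * m + p.2.val - 1 := rfl
    simp only [hNbdef, closedNbhd, Set.mem_setOf_eq]
    rcases hS q with hq | ⟨u, hu, hadj⟩
    · left
      simp only [hAdef, Set.mem_setOf_eq]
      exact ⟨by omega, by omega, q, hq, hq1, hq2⟩
    · rw [hGdef, boxProd_adj] at hadj
      rcases hadj with ⟨hc, he⟩ | ⟨hp, he⟩
      · -- cycle adjacency
        right
        refine ⟨(u.1, p.2), ?_, ?_⟩
        · simp only [hAdef, Set.mem_setOf_eq]
          refine ⟨by omega, by omega, u, hu, rfl, ?_⟩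
          show (u.2 : ℕ) = k * m + (p.2 : ℕ) - 1
          rw [he, hq2]
        · rw [hBdef, boxProd_adj]
          left
          exact ⟨hc, rfl⟩
      · -- path adjacency
        right
        rw [pathGraph_adj] at hp
        have huval : (u.2 : ℕ) + 1 = (q.2 : ℕ) ∨ (q.2 : ℕ) + 1 = (u.2 : ℕ) := hp
        have hub : k * m ≤ (u.2 : ℕ) ∧ (u.2 : ℕ) < k * m + m := by omega
        refine ⟨(p.1, ⟨(u.2 : ℕ) - k * m + 1, by omega⟩), ?_, ?_⟩
        · simp only [hAdef, Set.mem_setOf_eq]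
          refine ⟨by omega, by omega, u, hu, ?_, ?_⟩
          · show u.1 = p.1
            rw [he, hq1]
          · show (u.2 : ℕ) = k * m + ((u.2 : ℕ) - k * m + 1) - 1
            omega
        · rw [hBdef, boxProd_adj]
          right
          refine ⟨?_, rfl⟩
          rw [pathGraph_adj]
          show ((u.2 : ℕ) - k * m + 1) + 1 = (p.2 : ℕ) ∨ (p.2 : ℕ) + 1 = ((u.2 : ℕ) - k * m + 1)
          omega
  have hwa : ∀ k, k < t → a ≤ 5 * ((A k).ncard : ℤ) - ((Nb k).ncard : ℤ) := by
    intro k hk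
    exact hA (A k) (hcond1 k) (fun v h1 h2 => hcond2 k hk v h1 h2)
  have hw0 : ∀ k, ((Nb k).ncard : ℤ) ≤ 5 * ((A k).ncard : ℤ) := by
    intro k
    have := closedNbhd_card_le B (fun v => five_bound v) (A k)
    simp only [hNbdef]
    exact_mod_cast this
  have hsum1 : ∑ k ∈ Finset.range t, (A k).ncard ≤ S.ncard := by
    have hAcard : ∀ k ∈ Finset.range t, (A k).ncard =
        (S ∩ {q : Fin (n' + 2) × Fin (t * m) | k * m ≤ q.2.val ∧ q.2.val < k * m + m}).ncard := by
      intro k hk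
      rw [Finset.mem_range] at hk
      have hbk := hblock k hk
      set f : Fin (n' + 2) × Fin (m + 2) → Fin (n' + 2) × Fin (t * m) := fun p =>
        (p.1, ⟨(k * m + p.2.val - 1) % (t * m), Nat.mod_lt _ hTM⟩) with hfdef
      have hval : ∀ p : Fin (n' + 2) × Fin (m + 2), p ∈ A k →
          (f p).2.val = k * m + p.2.val - 1 := by
        intro p hp
        obtain ⟨hp1, hp2, -⟩ := hp
        show (k * m + p.2.val - 1) % (t * m) = k * m + p.2.val - 1
        exact Nat.mod_eq_of_lt (by omega)
      have hinj : Set.InjOn f (A k) := by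
        intro p hp p' hp' hfp
        have h1 : p.1 = p'.1 := congrArg (fun x : Fin (n' + 2) × Fin (t * m) => x.1) hfp
        have h2 : (f p).2.val = (f p').2.val := congrArg (fun x => x.2.val) hfp
        rw [hval p hp, hval p' hp'] at h2
        obtain ⟨hb1, -, -⟩ := hp
        obtain ⟨hb2, -, -⟩ := hp'
        exact Prod.ext h1 (Fin.ext (by omega))
      have himg : f '' A k =
          S ∩ {q : Fin (n' + 2) × Fin (t * m) | k * m ≤ q.2.val ∧ q.2.val < k * m + m} := by
        ext q
        constructor
        · rintro ⟨p, hp, rfl⟩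
          have hv := hval p hp
          obtain ⟨hp1, hp2, q', hq'S, hq'1, hq'2⟩ := hp
          have heq : f p = q' := by
            refine Prod.ext hq'1.symm (Fin.ext ?_)
            rw [hv, hq'2]
          constructor
          · rw [heq]; exact hq'S
          · show k * m ≤ (f p).2.val ∧ (f p).2.val < k * m + m
            rw [hv]
            omega
        · rintro ⟨hqS, hq12⟩
          obtain ⟨hq1, hq2⟩ := hq12
          have hql := q.2.isLt
          refine ⟨(q.1, ⟨q.2.val - k * m + 1, by omega⟩), ?_, ?_⟩
          · simp only [hAdef, Set.mem_setOf_eq]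
            refine ⟨?_, ?_, q, hqS, rfl, ?_⟩
            · show 1 ≤ q.2.val - k * m + 1
              omega
            · show q.2.val - k * m + 1 ≤ m
              omega
            · show (q.2 : ℕ) = k * m + (q.2.val - k * m + 1) - 1
              omega
          · refine Prod.ext rfl (Fin.ext ?_)
            show (k * m + (q.2.val - k * m + 1) - 1) % (t * m) = (q.2 : ℕ)
            rw [Nat.mod_eq_of_lt (by omega)]
            omega
      rw [← himg, Set.ncard_image_of_injOn hinj]
    rw [Finset.sum_congr rfl hAcard]
    apply sum_ncard_le_of_disjoint
    · intro i _
      exact Set.inter_subset_left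
    · intro i hi j hj hij
      rw [Finset.mem_range] at hi hj
      rw [Set.disjoint_left]
      rintro q ⟨-, hq1, hq2⟩ ⟨-, hq3, hq4⟩
      rcases Nat.lt_or_ge i j with h | h
      · have hle : (i + 1) * m ≤ j * m := Nat.mul_le_mul_right m (by omega)
        rw [add_mul, one_mul] at hle
        omega
      · have hij' : j < i := by omega
        have hle : (j + 1) * m ≤ i * m := Nat.mul_le_mul_right m (by omega)
        rw [add_mul, one_mul] at hle
        omega
  have hsum2 : (n' + 2) * (t * m) ≤ ∑ k ∈ Finset.range t, (Nb k).ncard := by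
    have hS' : ∀ v : Fin (n' + 2) × Fin (t * m), ∃ u, u ∈ S ∧ (u = v ∨ G.Adj u v) := by
      intro v
      rcases hS v with hv | ⟨u, hu, hadj⟩
      · exact ⟨v, hv, Or.inl rfl⟩
      · exact ⟨u, hu, Or.inr hadj⟩
    choose uf hufS hufadj using hS'
    set kf : Fin (n' + 2) × Fin (t * m) → ℕ := fun v => (uf v).2.val / m with hkfdef
    have hkv : ∀ v, kf v * m ≤ (uf v).2.val ∧ (uf v).2.val < kf v * m + m := by
      intro v
      have e1 := Nat.div_add_mod ((uf v).2.val) m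
      have e2 := Nat.mod_lt ((uf v).2.val) hm0
      have e3 : kf v * m = m * ((uf v).2.val / m) := Nat.mul_comm _ _
      rw [e3]
      omega
    have hvu : ∀ v, (uf v).2.val ≤ v.2.val + 1 ∧ v.2.val ≤ (uf v).2.val + 1 := by
      intro v
      rcases hufadj v with heq | hadj
      · rw [heq]; omega
      · rw [hGdef, boxProd_adj] at hadj
        rcases hadj with ⟨-, he⟩ | ⟨hp, -⟩
        · rw [he]; omega
        · rw [pathGraph_adj] at hp
          omega
    have hkt : ∀ v, kf v < t := by
      intro v
      have := (uf v).2.isLt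
      exact (Nat.div_lt_iff_lt_mul hm0).mpr (by omega)
    set F : Fin (n' + 2) × Fin (t * m) → ℕ × (Fin (n' + 2) × Fin (m + 2)) := fun v =>
      (kf v, (v.1, ⟨(v.2.val + 1 - kf v * m) % (m + 2), Nat.mod_lt _ (by omega)⟩)) with hFdef
    have hFval : ∀ v, (F v).2.2.val = v.2.val + 1 - kf v * m := by
      intro v
      have h1 := hkv v
      have h2 := hvu v
      show (v.2.val + 1 - kf v * m) % (m + 2) = v.2.val + 1 - kf v * m
      exact Nat.mod_eq_of_lt (by omega)
    have hinj : Set.InjOn F Set.univ := by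
      intro v _ v' _ hF
      have hk : kf v = kf v' := congrArg Prod.fst hF
      have h1 : v.1 = v'.1 := congrArg (fun x => x.2.1) hF
      have h2 : (F v).2.2.val = (F v').2.2.val := congrArg (fun x => x.2.2.val) hF
      rw [hFval v, hFval v'] at h2
      have ha1 := hkv v
      have ha2 := hvu v
      have hb1 := hkv v'
      have hb2 := hvu v'
      rw [hk] at ha1 h2
      exact Prod.ext h1 (Fin.ext (by omega))
    have himg : F '' Set.univ ⊆ ⋃ k ∈ Finset.range t, Prod.mk k '' (Nb k) := by
      rintro x ⟨v, -, rfl⟩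
      have hkvv := hkv v
      have hvuv := hvu v
      have hult := (uf v).2.isLt
      have hFv := hFval v
      refine Set.mem_biUnion (Finset.mem_range.mpr (hkt v)) ⟨(F v).2, ?_, rfl⟩
      have hpu : ((uf v).1, (⟨(uf v).2.val - kf v * m + 1, by omega⟩ : Fin (m + 2)))
          ∈ A (kf v) := by
        simp only [hAdef, Set.mem_setOf_eq]
        refine ⟨by omega, by omega, uf v, hufS v, rfl, ?_⟩
        show (uf v).2.val = kf v * m + ((uf v).2.val - kf v * m + 1) - 1
        omega
      simp only [hNbdef, closedNbhd, Set.mem_setOf_eq]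
      rcases hufadj v with heq | hadj
      · left
        have hk2 := hkv v
        rw [heq] at hk2
        have hsame : (F v).2 = ((uf v).1,
            (⟨(uf v).2.val - kf v * m + 1, by omega⟩ : Fin (m + 2))) := by
          refine Prod.ext ?_ (Fin.ext ?_)
          · show v.1 = (uf v).1
            rw [heq]
          · show (v.2.val + 1 - kf v * m) % (m + 2) = (uf v).2.val - kf v * m + 1
            rw [Nat.mod_eq_of_lt (by omega), heq]
            omega
        show (F v).2 ∈ A (kf v)
        rw [hsame]
        exact hpu
      · rw [hGdef, boxProd_adj] at hadj
        right
        refine ⟨_, hpu, ?_⟩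
        rw [hBdef, boxProd_adj]
        rcases hadj with ⟨hc, he⟩ | ⟨hp, he⟩
        · left
          refine ⟨hc, Fin.ext ?_⟩
          have heval : (uf v).2.val = v.2.val := congrArg Fin.val he
          show (uf v).2.val - kf v * m + 1 = (v.2.val + 1 - kf v * m) % (m + 2)
          rw [Nat.mod_eq_of_lt (by omega)]
          omega
        · right
          rw [pathGraph_adj] at hp
          refine ⟨?_, he⟩
          rw [pathGraph_adj]
          show ((uf v).2.val - kf v * m + 1) + 1 = (v.2.val + 1 - kf v * m) % (m + 2) ∨
            (v.2.val + 1 - kf v * m) % (m + 2) + 1 = ((uf v).2.val - kf v * m + 1)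
          rw [Nat.mod_eq_of_lt (by omega)]
          omega
    have hcard1 : (F '' Set.univ).ncard = (n' + 2) * (t * m) := by
      rw [Set.ncard_image_of_injOn hinj, Set.ncard_univ, Nat.card_eq_fintype_card]
      simp
    have hfinU : (⋃ k ∈ Finset.range t, Prod.mk k '' (Nb k)).Finite := by
      apply Set.Finite.biUnion (Finset.range t).finite_toSet
      intro k _
      exact (Set.toFinite (Nb k)).image _
    have hle1 : (F '' Set.univ).ncard ≤ (⋃ k ∈ Finset.range t, Prod.mk k '' (Nb k)).ncard :=
      Set.ncard_le_ncard himg hfinU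
    have hle2 := ncard_biUnion_le (Finset.range t) (fun k => Prod.mk k '' (Nb k))
    have hle3 : ∀ k ∈ Finset.range t, (Prod.mk k '' (Nb k)).ncard = (Nb k).ncard := by
      intro k _
      apply Set.ncard_image_of_injOn
      intro x _ y _ hxy
      exact (Prod.ext_iff.mp hxy).2
    rw [Finset.sum_congr rfl hle3] at hle2
    omega
  -- combine
  have E1 : (∑ k ∈ Finset.range t, ((A k).ncard : ℤ)) ≤ (S.ncard : ℤ) := by
    exact_mod_cast hsum1
  have E2 : ((n' + 2 : ℤ)) * ((t : ℤ) * (m : ℤ)) ≤ ∑ k ∈ Finset.range t, ((Nb k).ncard : ℤ) := by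
    exact_mod_cast hsum2
  have hsplit : ∑ k ∈ Finset.range t, (5 * ((A k).ncard : ℤ) - ((Nb k).ncard : ℤ))
      = 5 * (∑ k ∈ Finset.range t, ((A k).ncard : ℤ))
        - ∑ k ∈ Finset.range t, ((Nb k).ncard : ℤ) := by
    rw [Finset.sum_sub_distrib, Finset.mul_sum]
  have E3 : ((t : ℤ) - 2) * a
      ≤ ∑ k ∈ Finset.range t, (5 * ((A k).ncard : ℤ) - ((Nb k).ncard : ℤ)) := by
    rcases le_or_gt a 0 with ha | ha
    · have h1 : (0 : ℤ) ≤ ∑ k ∈ Finset.range t, (5 * ((A k).ncard : ℤ) - ((Nb k).ncard : ℤ)) :=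
        Finset.sum_nonneg (fun k _ => by have := hw0 k; omega)
      have ht' : (2 : ℤ) ≤ (t : ℤ) := by exact_mod_cast ht
      have h2 : ((t : ℤ) - 2) * a ≤ 0 :=
        mul_nonpos_of_nonneg_of_nonpos (by omega) ha
      linarith
    · have h1 : ∑ k ∈ Finset.range t, a
          ≤ ∑ k ∈ Finset.range t, (5 * ((A k).ncard : ℤ) - ((Nb k).ncard : ℤ)) :=
        Finset.sum_le_sum (fun k hk => hwa k (Finset.mem_range.mp hk))
      rw [Finset.sum_const, Finset.card_range, nsmul_eq_mul] at h1
      have h2 : ((t : ℤ) - 2) * a ≤ (t : ℤ) * a := by nlinarith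
      linarith
  have hZ : ((n' + 2 : ℤ)) * ((t : ℤ) * (m : ℤ)) + ((t : ℤ) - 2) * a ≤ 5 * (S.ncard : ℤ) := by
    rw [hsplit] at E3
    linarith
  rw [ge_iff_le, div_le_iff₀ (by norm_num : (0 : ℚ) < 5)]
  have hQ : ((n' : ℚ) + 2) * ((t : ℚ) * (m : ℚ)) + ((t : ℚ) - 2) * (a : ℚ)
      ≤ 5 * (S.ncard : ℚ) := by
    exact_mod_cast hZ
  push_cast
  nlinarith [hQ]
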